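/- Let N be a normal subgroup of a group G of bijections of a set X, let g ∈ N, and let V ⊆ X be such that g(V) ∩ V = ∅. Then for all a, b ∈ G with supports contained in V, the commutator [a, b] belongs to N. -/

import Mathlib

open scoped commutatorElement

/-- Permutations with "disjoint" supports commute. -/
lemma aux_commute_of_supp {X : Type*} (f h : Equiv.Perm X)
    (hd : ∀ x, f x ≠ x → h x = x) : Commute f h := by
  apply Equiv.Perm.Disjoint.commute
  intro x
  by_cases hx : f x = x
  · exact Or.inl hx
  · exact Or.inr (hd x hx)

/-- Key step of the simplicity proof: if `N ⊴ G`, `g ∈ N`, and `g(V) ∩ V = ∅`, then every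
commutator of elements of `G` supported in `V` lies in `N`. -/
theorem stmt_7 {X : Type*} (G : Subgroup (Equiv.Perm X))
    (N : Subgroup G) (hN : N.Normal) (g : G) (hgN : g ∈ N)
    (V : Set X) (hgV : (g : Equiv.Perm X) '' V ∩ V = ∅)
    (a b : G)
    (ha : {x | (a : Equiv.Perm X) x ≠ x} ⊆ V)
    (hb : {x | (b : Equiv.Perm X) x ≠ x} ⊆ V) :
    ⁅a, b⁆ ∈ N := by
  set k : G := g * a * g⁻¹ with hk_def
  -- k commutes with anything supported in V
  have key : ∀ c : G, ({x | (c : Equiv.Perm X) x ≠ x} ⊆ V) → Commute k c := by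
    intro c hc
    have hperm : Commute (k : Equiv.Perm X) (c : Equiv.Perm X) := by
      apply aux_commute_of_supp
      intro x hx
      by_contra hcx
      have hxV : x ∈ V := hc hcx
      -- show x ∈ g '' V
      have hkx : (a : Equiv.Perm X) ((g : Equiv.Perm X)⁻¹ x) ≠ (g : Equiv.Perm X)⁻¹ x := by
        intro heq
        apply hx
        simp only [hk_def, Subgroup.coe_mul, InvMemClass.coe_inv, Equiv.Perm.mul_apply]
        rw [heq]
        simp
      have : (g : Equiv.Perm X)⁻¹ x ∈ V := ha hkx
      have hxg : x ∈ (g : Equiv.Perm X) '' V := ⟨_, this, by simp⟩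
      have : x ∈ ((g : Equiv.Perm X) '' V ∩ V) := ⟨hxg, hxV⟩
      rw [hgV] at this
      exact this
    have : (k : Equiv.Perm X) * c = c * k := hperm
    exact Subtype.ext this
  have hka : Commute k a := key a ha
  have hkb : Commute k b := key b hb
  -- supp of a⁻¹ * b * a ⊆ V
  have hsupp : {x | ((a⁻¹ * b * a : G) : Equiv.Perm X) x ≠ x} ⊆ V := by
    intro x hx
    simp only [Set.mem_setOf_eq, Subgroup.coe_mul, InvMemClass.coe_inv,
      Equiv.Perm.mul_apply] at hx
    by_cases hax : (a : Equiv.Perm X) x = x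
    · by_cases hbx : (b : Equiv.Perm X) x = x
      · exfalso
        apply hx
        rw [hax, hbx]
        exact Equiv.Perm.inv_eq_iff_eq.mpr hax.symm
      · exact hb hbx
    · exact ha hax
  have hkm : Commute k (a⁻¹ * b * a) := key _ hsupp
  -- h2 : conjugation by ⁅g,a⁆ equals conjugation by a⁻¹
  have hga : ⁅g, a⁆ = k * a⁻¹ := by rw [hk_def]; group
  have h2 : ⁅g, a⁆ * b * ⁅g, a⁆⁻¹ = a⁻¹ * b * a := by
    rw [hga]
    have : (k * a⁻¹) * b * (k * a⁻¹)⁻¹ = k * (a⁻¹ * b * a) * k⁻¹ := by group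
    rw [this, hkm.eq, mul_inv_cancel_right]
  -- membership facts
  have hmem1 : ⁅g, a⁆ ∈ N := by
    rw [commutatorElement_def, mul_assoc g, mul_assoc]
    exact mul_mem hgN (hN.conj_mem _ (inv_mem hgN) a)
  have hmem2 : ⁅⁅g, a⁆, b⁆ ∈ N := by
    rw [commutatorElement_def, mul_assoc ⁅g,a⁆, mul_assoc]
    exact mul_mem hmem1 (hN.conj_mem _ (inv_mem hmem1) b)
  have hfinal : ⁅a, b⁆ = a * ⁅⁅g, a⁆, b⁆⁻¹ * a⁻¹ := by
    rw [commutatorElement_def ⁅g, a⁆ b, h2]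
    group
  rw [hfinal]
  exact hN.conj_mem _ (inv_mem hmem2) a
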